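/- Let G = G^1 ⊗ … ⊗ G^n and F = F^1 ⊗ … ⊗ F^n be product probability distributions on [0, x̄]^n with continuous marginal CDFs, and suppose sup_x |F^i(x) − G^i(x)| ≤ Δ for every i. Let p* ∈ ℝ^n satisfy p*_i > 0 for all i and Σ_i p*_i = 1, and suppose λ, λ* ∈ ℝ^n satisfy p_j(G, λ) = p*_j for all j and p_j(F, λ*) = p*_j for all j. Then for every agent i, | E_{X∼F}[ X_i · 1{X ∈ L_i(λ)} ] − E_{X∼F}[ X_i · 1{X ∈ L_i(λ*)} ] | ≤ n Δ x̄. -/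

import Mathlib

open MeasureTheory ProbabilityTheory Real

noncomputable section

/-- CDF of a measure on `ℝ`. -/
def mcdf (μ : Measure ℝ) (x : ℝ) : ℝ := (μ (Set.Iic x)).toReal

section RealLemmas

variable {ν ν' : Measure ℝ}

lemma mcdf_Iic (ν : Measure ℝ) [IsProbabilityMeasure ν] (c : ℝ) :
    ν (Set.Iic c) = ENNReal.ofReal (mcdf ν c) := by
  rw [mcdf, ENNReal.ofReal_toReal (measure_ne_top ν _)]

lemma mcdf_singleton [IsProbabilityMeasure ν] (h : Continuous (mcdf ν)) (c : ℝ) :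
    ν {c} = 0 := by
  have key : ∀ ε : ℝ, 0 < ε → (ν {c}).toReal ≤ mcdf ν c - mcdf ν (c - ε) := by
    intro ε hε
    have h1 : ν {c} ≤ ν (Set.Ioc (c - ε) c) := by
      apply measure_mono
      intro x hx
      simp only [Set.mem_singleton_iff] at hx
      subst hx
      constructor <;> simp <;> linarith
    have hd : Set.Ioc (c - ε) c = Set.Iic c \ Set.Iic (c - ε) := by
      ext x; simp only [Set.mem_Ioc, Set.mem_diff, Set.mem_Iic, not_le]; tauto
    have h2 : ν (Set.Ioc (c - ε) c) = ν (Set.Iic c) - ν (Set.Iic (c - ε)) := by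
      rw [hd, measure_diff (Set.Iic_subset_Iic.mpr (by linarith)) measurableSet_Iic.nullMeasurableSet
        (measure_ne_top _ _)]
    have h3 : (ν (Set.Ioc (c - ε) c)).toReal = mcdf ν c - mcdf ν (c - ε) := by
      rw [h2, ENNReal.toReal_sub_of_le (measure_mono (Set.Iic_subset_Iic.mpr (by linarith)))
        (measure_ne_top _ _)]
      rfl
    calc (ν {c}).toReal ≤ (ν (Set.Ioc (c - ε) c)).toReal :=
          ENNReal.toReal_mono (measure_ne_top _ _) h1
      _ = _ := h3
  have hten : Filter.Tendsto (fun ε : ℝ => mcdf ν c - mcdf ν (c - ε))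
      (nhdsWithin 0 (Set.Ioi 0)) (nhds 0) := by
    have h0 : Filter.Tendsto (fun ε : ℝ => c - ε) (nhdsWithin 0 (Set.Ioi 0)) (nhds c) := by
      apply Filter.Tendsto.mono_left _ nhdsWithin_le_nhds
      have hcc : Continuous (fun ε : ℝ => c - ε) := continuous_const.sub continuous_id
      simpa using hcc.tendsto (0:ℝ)
    have h1 := (h.tendsto c).comp h0
    have h2 := Filter.Tendsto.const_sub (mcdf ν c) h1
    simpa using h2
  have hle : (ν {c}).toReal ≤ 0 := by
    refine ge_of_tendsto hten ?_
    filter_upwards [self_mem_nhdsWithin] with ε hε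
    exact key ε hε
  have : (ν {c}).toReal = 0 := le_antisymm hle ENNReal.toReal_nonneg
  rwa [ENNReal.toReal_eq_zero_iff, or_iff_left (measure_ne_top _ _)] at this

lemma measure_Iio_eq [IsProbabilityMeasure ν] (h : Continuous (mcdf ν)) (c : ℝ) :
    ν (Set.Iio c) = ν (Set.Iic c) := by
  refine le_antisymm (measure_mono Set.Iio_subset_Iic_self) ?_
  calc ν (Set.Iic c) ≤ ν (Set.Iio c ∪ {c}) := by
        apply measure_mono; rw [Set.Iio_union_right]
    _ ≤ ν (Set.Iio c) + ν {c} := measure_union_le _ _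
    _ = ν (Set.Iio c) := by rw [mcdf_singleton h, add_zero]

lemma measure_Ici_toReal [IsProbabilityMeasure ν] (h : Continuous (mcdf ν)) (c : ℝ) :
    (ν (Set.Ici c)).toReal = 1 - mcdf ν c := by
  have : ν (Set.Ici c) = ν Set.univ - ν (Set.Iio c) := by
    rw [← Set.compl_Iio, measure_compl measurableSet_Iio (measure_ne_top _ _)]
  rw [this, measure_Iio_eq h, measure_univ,
    ENNReal.toReal_sub_of_le prob_le_one ENNReal.one_ne_top, ENNReal.toReal_one]
  rfl

lemma measure_Ioi_toReal [IsProbabilityMeasure ν] (h : Continuous (mcdf ν)) (c : ℝ) :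
    (ν (Set.Ioi c)).toReal = 1 - mcdf ν c := by
  have : ν (Set.Ioi c) = ν Set.univ - ν (Set.Iic c) := by
    rw [← Set.compl_Iic, measure_compl measurableSet_Iic (measure_ne_top _ _)]
  rw [this, measure_univ,
    ENNReal.toReal_sub_of_le prob_le_one ENNReal.one_ne_top, ENNReal.toReal_one]
  rfl

end RealLemmas

section SectionBound

variable {ν ν' : Measure ℝ} {Δ : ℝ}

/-- Up-closed sets: measure comparison. -/
lemma upperSet_bound [IsProbabilityMeasure ν] [IsProbabilityMeasure ν']
    (hν : Continuous (mcdf ν)) (hν' : Continuous (mcdf ν'))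
    (hc : ∀ x, |mcdf ν x - mcdf ν' x| ≤ Δ)
    {S : Set ℝ} (hS : ∀ ⦃t t' : ℝ⦄, t ≤ t' → t ∈ S → t' ∈ S) :
    (ν S).toReal ≤ (ν' S).toReal + Δ := by
  have hΔ : 0 ≤ Δ := le_trans (abs_nonneg _) (hc 0)
  rcases S.eq_empty_or_nonempty with rfl | hne
  · simp only [measure_empty, ENNReal.toReal_zero]; linarith
  by_cases hbd : BddBelow S
  · set c := sInf S with hc'
    have hsub1 : S ⊆ Set.Ici c := fun t ht => csInf_le hbd ht
    have hsub2 : Set.Ioi c ⊆ S := by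
      intro t ht
      obtain ⟨s, hsS, hst⟩ := exists_lt_of_csInf_lt hne ht
      exact hS (le_of_lt hst) hsS
    have h1 : (ν S).toReal ≤ 1 - mcdf ν c := by
      rw [← measure_Ici_toReal hν]
      exact ENNReal.toReal_mono (measure_ne_top _ _) (measure_mono hsub1)
    have h2 : 1 - mcdf ν' c ≤ (ν' S).toReal := by
      rw [← measure_Ioi_toReal hν']
      exact ENNReal.toReal_mono (measure_ne_top _ _) (measure_mono hsub2)
    have h3 : mcdf ν' c ≤ mcdf ν c + Δ := by
      have := abs_le.mp (hc c)
      linarith [this.1]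
    linarith
  · have hS' : S = Set.univ := by
      ext t
      simp only [Set.mem_univ, iff_true]
      obtain ⟨s, hsS, hst⟩ := (not_bddBelow_iff.mp hbd) t
      exact hS (le_of_lt hst) hsS
    subst hS'
    simp only [measure_univ, ENNReal.toReal_one]
    linarith

/-- The main per-section comparison: `S ⊆ [0,x̄]`, monotone or antitone within the box. -/
lemma section_bound {xbar : ℝ} [IsProbabilityMeasure ν] [IsProbabilityMeasure ν']
    (hν : Continuous (mcdf ν)) (hν' : Continuous (mcdf ν'))
    (hc : ∀ x, |mcdf ν x - mcdf ν' x| ≤ Δ)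
    (hνb : ν (Set.Icc 0 xbar) = 1) (hν'b : ν' (Set.Icc 0 xbar) = 1)
    {S : Set ℝ} (hSm : MeasurableSet S) (hSsub : S ⊆ Set.Icc 0 xbar)
    (hmono : (∀ ⦃t t' : ℝ⦄, t ∈ Set.Icc 0 xbar → t' ∈ Set.Icc 0 xbar → t ≤ t' → t ∈ S → t' ∈ S) ∨
      (∀ ⦃t t' : ℝ⦄, t ∈ Set.Icc 0 xbar → t' ∈ Set.Icc 0 xbar → t ≤ t' → t' ∈ S → t ∈ S)) :
    (ν S).toReal ≤ (ν' S).toReal + Δ := by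
  have hν0 : ν (Set.Icc 0 xbar)ᶜ = 0 := by
    rw [measure_compl measurableSet_Icc (measure_ne_top _ _), hνb, measure_univ, tsub_self]
  have hν'0 : ν' (Set.Icc 0 xbar)ᶜ = 0 := by
    rw [measure_compl measurableSet_Icc (measure_ne_top _ _), hν'b, measure_univ, tsub_self]
  rcases hmono with hup | hdown
  · -- consider S' = S ∪ Ioi xbar, which is up-closed on all of ℝ
    set S' := S ∪ Set.Ioi xbar with hS'
    have hU : ∀ ⦃t t' : ℝ⦄, t ≤ t' → t ∈ S' → t' ∈ S' := by
      intro t t' htt' ht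
      rcases ht with ht | ht
      · have htb := hSsub ht
        by_cases h' : t' ≤ xbar
        · exact Or.inl (hup htb ⟨le_trans htb.1 htt', h'⟩ htt' ht)
        · exact Or.inr (by simpa using lt_of_not_ge h')
      · exact Or.inr (lt_of_lt_of_le ht htt')
    have hνS' : ν S' = ν S := by
      refine le_antisymm ?_ (measure_mono Set.subset_union_left)
      calc ν S' ≤ ν S + ν (Set.Ioi xbar) := measure_union_le _ _
        _ ≤ ν S + ν (Set.Icc 0 xbar)ᶜ := by
            gcongr
            intro t ht
            simp only [Set.mem_compl_iff, Set.mem_Icc, not_and, not_le]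
            intro _; exact ht
        _ = ν S := by rw [hν0, add_zero]
    have hν'S' : ν' S' = ν' S := by
      refine le_antisymm ?_ (measure_mono Set.subset_union_left)
      calc ν' S' ≤ ν' S + ν' (Set.Ioi xbar) := measure_union_le _ _
        _ ≤ ν' S + ν' (Set.Icc 0 xbar)ᶜ := by
            gcongr
            intro t ht
            simp only [Set.mem_compl_iff, Set.mem_Icc, not_and, not_le]
            intro _; exact ht
        _ = ν' S := by rw [hν'0, add_zero]
    rw [← hνS', ← hν'S']
    exact upperSet_bound hν hν' hc hU
  · -- S' = S ∪ Iio 0 is down-closed; use complements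
    set S' := S ∪ Set.Iio 0 with hS'
    have hD : ∀ ⦃t t' : ℝ⦄, t ≤ t' → t' ∈ S' → t ∈ S' := by
      intro t t' htt' ht'
      rcases ht' with ht' | ht'
      · have ht'b := hSsub ht'
        by_cases h' : 0 ≤ t
        · exact Or.inl (hdown ⟨h', le_trans htt' ht'b.2⟩ ht'b htt' ht')
        · exact Or.inr (by simpa using lt_of_not_ge h')
      · exact Or.inr (lt_of_le_of_lt htt' ht')
    have hU : ∀ ⦃t t' : ℝ⦄, t ≤ t' → t ∈ S'ᶜ → t' ∈ S'ᶜ := by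
      intro t t' htt' ht ht'
      exact ht (hD htt' ht')
    have hνS' : ν S' = ν S := by
      refine le_antisymm ?_ (measure_mono Set.subset_union_left)
      calc ν S' ≤ ν S + ν (Set.Iio 0) := measure_union_le _ _
        _ ≤ ν S + ν (Set.Icc 0 xbar)ᶜ := by
            gcongr
            intro t ht
            simp only [Set.mem_compl_iff, Set.mem_Icc, not_and, not_le]
            intro h; exact absurd h (not_le.mpr ht)
        _ = ν S := by rw [hν0, add_zero]
    have hν'S' : ν' S' = ν' S := by
      refine le_antisymm ?_ (measure_mono Set.subset_union_left)
      calc ν' S' ≤ ν' S + ν' (Set.Iio 0) := measure_union_le _ _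
        _ ≤ ν' S + ν' (Set.Icc 0 xbar)ᶜ := by
            gcongr
            intro t ht
            simp only [Set.mem_compl_iff, Set.mem_Icc, not_and, not_le]
            intro h; exact absurd h (not_le.mpr ht)
        _ = ν' S := by rw [hν'0, add_zero]
    have hS'm : MeasurableSet S' := hSm.union measurableSet_Iio
    have hcsym : ∀ x, |mcdf ν' x - mcdf ν x| ≤ Δ := fun x => by
      rw [abs_sub_comm]; exact hc x
    have hcompl := upperSet_bound hν' hν hcsym hU
    have e1 : (ν S'ᶜ).toReal = 1 - (ν S').toReal := by
      rw [measure_compl hS'm (measure_ne_top _ _), measure_univ,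
        ENNReal.toReal_sub_of_le prob_le_one ENNReal.one_ne_top, ENNReal.toReal_one]
    have e2 : (ν' S'ᶜ).toReal = 1 - (ν' S').toReal := by
      rw [measure_compl hS'm (measure_ne_top _ _), measure_univ,
        ENNReal.toReal_sub_of_le prob_le_one ENNReal.one_ne_top, ENNReal.toReal_one]
    rw [← hνS', ← hν'S']
    rw [e1, e2] at hcompl
    linarith

end SectionBound

section Swap

lemma pi_swap_le {m : ℕ} {xbar : ℝ} (ν1 ν2 : Fin (m+1) → Measure ℝ)
    [∀ j, IsProbabilityMeasure (ν1 j)] [∀ j, IsProbabilityMeasure (ν2 j)]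
    (k : Fin (m+1)) (heq : ∀ j, j ≠ k → ν1 j = ν2 j)
    (h1b : ν1 k (Set.Icc 0 xbar) = 1) (h2b : ν2 k (Set.Icc 0 xbar) = 1)
    (hcont1 : Continuous (mcdf (ν1 k))) (hcont2 : Continuous (mcdf (ν2 k)))
    {Δ : ℝ} (hc : ∀ x, |mcdf (ν1 k) x - mcdf (ν2 k) x| ≤ Δ)
    {U : Set (Fin (m+1) → ℝ)} (hU : MeasurableSet U)
    (hUsub : ∀ x ∈ U, x k ∈ Set.Icc (0:ℝ) xbar)
    (hmono : (∀ (y : Fin m → ℝ) ⦃t t' : ℝ⦄, t ∈ Set.Icc 0 xbar → t' ∈ Set.Icc 0 xbar → t ≤ t' →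
        k.insertNth t y ∈ U → k.insertNth t' y ∈ U) ∨
      (∀ (y : Fin m → ℝ) ⦃t t' : ℝ⦄, t ∈ Set.Icc 0 xbar → t' ∈ Set.Icc 0 xbar → t ≤ t' →
        k.insertNth t' y ∈ U → k.insertNth t y ∈ U)) :
    Measure.pi ν1 U ≤ Measure.pi ν2 U + ENNReal.ofReal Δ := by
  classical
  set e := MeasurableEquiv.piFinSuccAbove (fun _ : Fin (m+1) => ℝ) k with he
  have hesymm : ∀ (t : ℝ) (y : Fin m → ℝ), e.symm (t, y) = k.insertNth t y := by
    intro t y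
    simp only [he, MeasurableEquiv.piFinSuccAbove]
    rfl
  have hV : MeasurableSet (e.symm ⁻¹' U) := e.symm.measurable hU
  have calc1 : ∀ (νf : Fin (m+1) → Measure ℝ), (∀ j, IsProbabilityMeasure (νf j)) →
      Measure.pi νf U = ∫⁻ y, (νf k) ((fun t => (t, y)) ⁻¹' (e.symm ⁻¹' U))
        ∂(Measure.pi fun j => νf (k.succAbove j)) := by
    intro νf hinst
    haveI := hinst
    have hmp := measurePreserving_piFinSuccAbove νf k
    have h1 : Measure.pi νf U
        = ((νf k).prod (Measure.pi fun j => νf (k.succAbove j))) (e.symm ⁻¹' U) := by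
      rw [← hmp.map_eq, Measure.map_apply e.measurable hV]
      congr 1
      ext x
      simp
    rw [h1, Measure.prod_apply_symm hV]
  have hrest : (fun j => ν1 (k.succAbove j)) = fun j => ν2 (k.succAbove j) :=
    funext fun j => heq _ (Fin.succAbove_ne k j)
  rw [calc1 ν1 inferInstance, calc1 ν2 inferInstance, hrest]
  set ρ : Measure (Fin m → ℝ) := Measure.pi fun j => ν2 (k.succAbove j) with hρ
  haveI : IsProbabilityMeasure ρ := by rw [hρ]; infer_instance
  have hsec : ∀ y : Fin m → ℝ,
      ν1 k ((fun t => (t, y)) ⁻¹' (e.symm ⁻¹' U))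
        ≤ ν2 k ((fun t => (t, y)) ⁻¹' (e.symm ⁻¹' U)) + ENNReal.ofReal Δ := by
    intro y
    set S : Set ℝ := (fun t => (t, y)) ⁻¹' (e.symm ⁻¹' U) with hSdef
    have hmemS : ∀ t : ℝ, t ∈ S ↔ k.insertNth t y ∈ U := by
      intro t
      simp only [hSdef, Set.mem_preimage, hesymm]
    have hSm : MeasurableSet S :=
      (measurable_id.prodMk measurable_const) hV
    have hSsub : S ⊆ Set.Icc 0 xbar := by
      intro t ht
      rw [hmemS] at ht
      have := hUsub _ ht
      rwa [Fin.insertNth_apply_same] at this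
    have hmono' : (∀ ⦃t t' : ℝ⦄, t ∈ Set.Icc 0 xbar → t' ∈ Set.Icc 0 xbar → t ≤ t' →
        t ∈ S → t' ∈ S) ∨ (∀ ⦃t t' : ℝ⦄, t ∈ Set.Icc 0 xbar → t' ∈ Set.Icc 0 xbar → t ≤ t' →
        t' ∈ S → t ∈ S) := by
      rcases hmono with h | h
      · left; intro t t' ht ht' htt' hmem
        rw [hmemS] at *
        exact h y ht ht' htt' hmem
      · right; intro t t' ht ht' htt' hmem
        rw [hmemS] at *
        exact h y ht ht' htt' hmem
    have := section_bound hcont1 hcont2 hc h1b h2b hSm hSsub hmono'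
    calc ν1 k S = ENNReal.ofReal ((ν1 k S).toReal) :=
          (ENNReal.ofReal_toReal (measure_ne_top _ _)).symm
      _ ≤ ENNReal.ofReal ((ν2 k S).toReal + Δ) := ENNReal.ofReal_le_ofReal this
      _ ≤ ENNReal.ofReal ((ν2 k S).toReal) + ENNReal.ofReal Δ := ENNReal.ofReal_add_le
      _ = ν2 k S + ENNReal.ofReal Δ := by
          rw [ENNReal.ofReal_toReal (measure_ne_top _ _)]
  calc (∫⁻ y, ν1 k ((fun t => (t, y)) ⁻¹' (e.symm ⁻¹' U)) ∂ρ)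
      ≤ ∫⁻ y, (ν2 k ((fun t => (t, y)) ⁻¹' (e.symm ⁻¹' U)) + ENNReal.ofReal Δ) ∂ρ :=
        lintegral_mono hsec
    _ = (∫⁻ y, ν2 k ((fun t => (t, y)) ⁻¹' (e.symm ⁻¹' U)) ∂ρ) + ENNReal.ofReal Δ := by
        rw [lintegral_add_right _ measurable_const, lintegral_const, measure_univ, mul_one]

end Swap

section Hybrid

lemma pi_hybrid_le {m : ℕ} {xbar Δ : ℝ} (Fm Gm : Fin (m+1) → Measure ℝ)
    [∀ j, IsProbabilityMeasure (Fm j)] [∀ j, IsProbabilityMeasure (Gm j)]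
    (hFsupp : ∀ j, Fm j (Set.Icc (0:ℝ) xbar) = 1)
    (hGsupp : ∀ j, Gm j (Set.Icc (0:ℝ) xbar) = 1)
    (hFcont : ∀ j, Continuous (mcdf (Fm j)))
    (hGcont : ∀ j, Continuous (mcdf (Gm j)))
    (hclose : ∀ j x, |mcdf (Fm j) x - mcdf (Gm j) x| ≤ Δ)
    {U : Set (Fin (m+1) → ℝ)} (hU : MeasurableSet U)
    (hUsub : ∀ x ∈ U, ∀ k, x k ∈ Set.Icc (0:ℝ) xbar)
    (hmono : ∀ k : Fin (m+1),
      (∀ (y : Fin m → ℝ) ⦃t t' : ℝ⦄, t ∈ Set.Icc 0 xbar → t' ∈ Set.Icc 0 xbar → t ≤ t' →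
        k.insertNth t y ∈ U → k.insertNth t' y ∈ U) ∨
      (∀ (y : Fin m → ℝ) ⦃t t' : ℝ⦄, t ∈ Set.Icc 0 xbar → t' ∈ Set.Icc 0 xbar → t ≤ t' →
        k.insertNth t' y ∈ U → k.insertNth t y ∈ U)) :
    Measure.pi Fm U ≤ Measure.pi Gm U + (m+1 : ℕ) * ENNReal.ofReal Δ := by
  classical
  set Hyb : ℕ → Fin (m+1) → Measure ℝ := fun r j => if (j:ℕ) < r then Fm j else Gm j with hHyb
  have hinst : ∀ r j, IsProbabilityMeasure (Hyb r j) := by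
    intro r j
    simp only [hHyb]
    split <;> infer_instance
  have key : ∀ r : ℕ, r ≤ m+1 →
      Measure.pi (Hyb r) U ≤ Measure.pi Gm U + (r : ℕ) * ENNReal.ofReal Δ := by
    intro r
    induction r with
    | zero =>
      intro _
      have h0 : Hyb 0 = Gm := funext fun j => by simp [hHyb]
      rw [h0]
      simp
    | succ r ih =>
      intro hr
      have hrm : r < m+1 := by omega
      set k : Fin (m+1) := ⟨r, hrm⟩ with hk
      have heq : ∀ j, j ≠ k → Hyb (r+1) j = Hyb r j := by
        intro j hj
        have hne : (j:ℕ) ≠ r := fun h => hj (Fin.ext h)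
        simp only [hHyb]
        by_cases h : (j:ℕ) < r
        · rw [if_pos (by omega), if_pos h]
        · rw [if_neg (by omega), if_neg h]
      have h1k : Hyb (r+1) k = Fm k := by simp [hHyb, hk]
      have h2k : Hyb r k = Gm k := by simp [hHyb, hk]
      haveI : ∀ j, IsProbabilityMeasure (Hyb (r+1) j) := hinst _
      haveI : ∀ j, IsProbabilityMeasure (Hyb r j) := hinst _
      have hswap := pi_swap_le (xbar := xbar) (Hyb (r+1)) (Hyb r) k heq
        (by rw [h1k]; exact hFsupp k) (by rw [h2k]; exact hGsupp k)
        (by rw [h1k]; exact hFcont k) (by rw [h2k]; exact hGcont k)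
        (by rw [h1k, h2k]; exact hclose k) hU (fun x hx => hUsub x hx k) (hmono k)
      calc Measure.pi (Hyb (r+1)) U ≤ Measure.pi (Hyb r) U + ENNReal.ofReal Δ := hswap
        _ ≤ Measure.pi Gm U + (r : ℕ) * ENNReal.ofReal Δ + ENNReal.ofReal Δ := by
            gcongr
            exact ih (by omega)
        _ = Measure.pi Gm U + ((r+1 : ℕ) : ENNReal) * ENNReal.ofReal Δ := by
            push_cast
            ring
  have hfin : Hyb (m+1) = Fm := funext fun j => by simp [hHyb, j.isLt]
  have := key (m+1) le_rfl
  rwa [hfin] at this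

lemma pi_hybrid_real {m : ℕ} {xbar Δ : ℝ} (Fm Gm : Fin (m+1) → Measure ℝ)
    [∀ j, IsProbabilityMeasure (Fm j)] [∀ j, IsProbabilityMeasure (Gm j)]
    (hFsupp : ∀ j, Fm j (Set.Icc (0:ℝ) xbar) = 1)
    (hGsupp : ∀ j, Gm j (Set.Icc (0:ℝ) xbar) = 1)
    (hFcont : ∀ j, Continuous (mcdf (Fm j)))
    (hGcont : ∀ j, Continuous (mcdf (Gm j)))
    (hΔ : 0 ≤ Δ)
    (hclose : ∀ j x, |mcdf (Fm j) x - mcdf (Gm j) x| ≤ Δ)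
    {U : Set (Fin (m+1) → ℝ)} (hU : MeasurableSet U)
    (hUsub : ∀ x ∈ U, ∀ k, x k ∈ Set.Icc (0:ℝ) xbar)
    (hmono : ∀ k : Fin (m+1),
      (∀ (y : Fin m → ℝ) ⦃t t' : ℝ⦄, t ∈ Set.Icc 0 xbar → t' ∈ Set.Icc 0 xbar → t ≤ t' →
        k.insertNth t y ∈ U → k.insertNth t' y ∈ U) ∨
      (∀ (y : Fin m → ℝ) ⦃t t' : ℝ⦄, t ∈ Set.Icc 0 xbar → t' ∈ Set.Icc 0 xbar → t ≤ t' →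
        k.insertNth t' y ∈ U → k.insertNth t y ∈ U)) :
    |(Measure.pi Fm U).toReal - (Measure.pi Gm U).toReal| ≤ (m+1 : ℕ) * Δ := by
  have hconv : ((m+1 : ℕ) * ENNReal.ofReal Δ).toReal = (m+1 : ℕ) * Δ := by
    rw [ENNReal.toReal_mul, ENNReal.toReal_ofReal hΔ, ENNReal.toReal_natCast]
  have h1 := pi_hybrid_le Fm Gm hFsupp hGsupp hFcont hGcont hclose hU hUsub hmono
  have hclose' : ∀ j x, |mcdf (Gm j) x - mcdf (Fm j) x| ≤ Δ := fun j x => by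
    rw [abs_sub_comm]; exact hclose j x
  have h2 := pi_hybrid_le Gm Fm hGsupp hFsupp hGcont hFcont hclose' hU hUsub hmono
  have hne : Measure.pi Gm U + (m+1 : ℕ) * ENNReal.ofReal Δ ≠ ⊤ := by
    apply ENNReal.add_ne_top.mpr
    exact ⟨measure_ne_top _ _, ENNReal.mul_ne_top (ENNReal.natCast_ne_top _) ENNReal.ofReal_ne_top⟩
  have hne' : Measure.pi Fm U + (m+1 : ℕ) * ENNReal.ofReal Δ ≠ ⊤ := by
    apply ENNReal.add_ne_top.mpr
    exact ⟨measure_ne_top _ _, ENNReal.mul_ne_top (ENNReal.natCast_ne_top _) ENNReal.ofReal_ne_top⟩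
  have t1 : (Measure.pi Fm U).toReal ≤ (Measure.pi Gm U).toReal + (m+1 : ℕ) * Δ := by
    have := ENNReal.toReal_mono hne h1
    rwa [ENNReal.toReal_add (measure_ne_top _ _)
      (ENNReal.mul_ne_top (ENNReal.natCast_ne_top _) ENNReal.ofReal_ne_top), hconv] at this
  have t2 : (Measure.pi Gm U).toReal ≤ (Measure.pi Fm U).toReal + (m+1 : ℕ) * Δ := by
    have := ENNReal.toReal_mono hne' h2
    rwa [ENNReal.toReal_add (measure_ne_top _ _)
      (ENNReal.mul_ne_top (ENNReal.natCast_ne_top _) ENNReal.ofReal_ne_top), hconv] at this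
  rw [abs_le]
  constructor <;> linarith

end Hybrid

/-- The Laguerre cell `L_i(λ) = {x ∈ [0,x̄]^n : x_i + λ_i > x_j + λ_j ∀ j ≠ i}`. -/
def laguerre {n : ℕ} (xbar : ℝ) (lam : Fin n → ℝ) (i : Fin n) : Set (Fin n → ℝ) :=
  {x | (∀ j, x j ∈ Set.Icc (0 : ℝ) xbar) ∧ ∀ j, j ≠ i → x j + lam j < x i + lam i}

/-- `p_j(𝐅, λ) = P_{X∼𝐅}(X ∈ L_j(λ))`, the fraction allocated to `j` under the greedy
allocation policy with parameter `λ`. -/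
def pAlloc {n : ℕ} (xbar : ℝ) (μ : Measure (Fin n → ℝ)) (lam : Fin n → ℝ) (j : Fin n) : ℝ :=
  (μ (laguerre xbar lam j)).toReal

section Geometry

variable {n : ℕ}

/-- The union of Laguerre cells indexed by `H`, slightly enlarged (ties within `H` allowed). -/
def Ubig (xbar : ℝ) (lam : Fin n → ℝ) (H : Finset (Fin n)) : Set (Fin n → ℝ) :=
  {x | (∀ j, x j ∈ Set.Icc (0:ℝ) xbar) ∧ ∀ j ∉ H, ∃ j' ∈ H, x j + lam j < x j' + lam j'}

/-- The set of ties. -/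
def tieSet (lam : Fin n → ℝ) : Set (Fin n → ℝ) :=
  ⋃ (j) (k) (_ : j ≠ k), {x | x j + lam j = x k + lam k}

lemma measurableSet_laguerre (xbar : ℝ) (lam : Fin n → ℝ) (i : Fin n) :
    MeasurableSet (laguerre xbar lam i) := by
  have h : laguerre xbar lam i =
      (⋂ j, (fun x : Fin n → ℝ => x j) ⁻¹' (Set.Icc 0 xbar)) ∩
      ⋂ (j) (_ : j ≠ i), {x : Fin n → ℝ | x j + lam j < x i + lam i} := by
    ext x
    simp only [laguerre, Set.mem_setOf_eq, Set.mem_inter_iff, Set.mem_iInter, Set.mem_preimage]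
  rw [h]
  refine MeasurableSet.inter (MeasurableSet.iInter fun j => (measurable_pi_apply j) measurableSet_Icc)
    (MeasurableSet.iInter fun j => MeasurableSet.iInter fun _ =>
      measurableSet_lt ((measurable_pi_apply j).add_const _) ((measurable_pi_apply i).add_const _))

lemma measurableSet_Ubig (xbar : ℝ) (lam : Fin n → ℝ) (H : Finset (Fin n)) :
    MeasurableSet (Ubig xbar lam H) := by
  have h : Ubig xbar lam H =
      (⋂ j, (fun x : Fin n → ℝ => x j) ⁻¹' (Set.Icc 0 xbar)) ∩
      ⋂ (j) (_ : j ∉ H), ⋃ (j') (_ : j' ∈ H), {x : Fin n → ℝ | x j + lam j < x j' + lam j'} := by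
    ext x
    simp only [Ubig, Set.mem_setOf_eq, Set.mem_inter_iff, Set.mem_iInter, Set.mem_preimage,
      Set.mem_iUnion]
    constructor
    · rintro ⟨h1, h2⟩
      exact ⟨h1, fun j hj => by obtain ⟨j', hj', hlt⟩ := h2 j hj; exact ⟨j', hj', hlt⟩⟩
    · rintro ⟨h1, h2⟩
      exact ⟨h1, fun j hj => by obtain ⟨j', hj', hlt⟩ := h2 j hj; exact ⟨j', hj', hlt⟩⟩
  rw [h]
  refine MeasurableSet.inter (MeasurableSet.iInter fun j => (measurable_pi_apply j) measurableSet_Icc)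
    (MeasurableSet.iInter fun j => MeasurableSet.iInter fun _ =>
      MeasurableSet.iUnion fun j' => MeasurableSet.iUnion fun _ =>
        measurableSet_lt ((measurable_pi_apply j).add_const _) ((measurable_pi_apply j').add_const _))

lemma measurableSet_tieSet (lam : Fin n → ℝ) : MeasurableSet (tieSet lam) :=
  MeasurableSet.iUnion fun j => MeasurableSet.iUnion fun k => MeasurableSet.iUnion fun _ =>
    measurableSet_eq_fun ((measurable_pi_apply j).add_const _) ((measurable_pi_apply k).add_const _)

lemma laguerre_subset_Ubig {xbar : ℝ} {lam : Fin n → ℝ} {H : Finset (Fin n)} {j' : Fin n}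
    (hj' : j' ∈ H) : laguerre xbar lam j' ⊆ Ubig xbar lam H := by
  intro x hx
  refine ⟨hx.1, fun j hj => ⟨j', hj', hx.2 j (fun h => hj (h ▸ hj'))⟩⟩

lemma laguerre_disjoint {xbar : ℝ} {lam : Fin n → ℝ} {j j' : Fin n} (h : j ≠ j') :
    Disjoint (laguerre xbar lam j) (laguerre xbar lam j') := by
  rw [Set.disjoint_left]
  intro x hx hx'
  have h1 := hx.2 j' h.symm
  have h2 := hx'.2 j h
  linarith

lemma Ubig_subset_cells [Nonempty (Fin n)] {xbar : ℝ} {lam : Fin n → ℝ} {H : Finset (Fin n)} :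
    Ubig xbar lam H ⊆ (⋃ j ∈ H, laguerre xbar lam j) ∪ tieSet lam := by
  intro x hx
  by_cases htie : x ∈ tieSet lam
  · exact Or.inr htie
  left
  have hne : (Finset.univ : Finset (Fin n)).Nonempty := Finset.univ_nonempty
  obtain ⟨j, -, hjmax⟩ := Finset.exists_max_image Finset.univ (fun j => x j + lam j) hne
  have hjH : j ∈ H := by
    by_contra hjH
    obtain ⟨j', hj'H, hlt⟩ := hx.2 j hjH
    exact absurd (hjmax j' (Finset.mem_univ j')) (not_le.mpr hlt)
  have hxL : x ∈ laguerre xbar lam j := by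
    refine ⟨hx.1, fun j'' hj'' => ?_⟩
    rcases lt_or_eq_of_le (hjmax j'' (Finset.mem_univ j'')) with h | h
    · exact h
    · exact absurd (Set.mem_iUnion.mpr ⟨j'', Set.mem_iUnion.mpr ⟨j, Set.mem_iUnion.mpr ⟨hj'', h⟩⟩⟩)
        htie
  exact Set.mem_biUnion hjH hxL

end Geometry

section Fiber

lemma pi_fiber {m : ℕ} (νf : Fin (m+1) → Measure ℝ) [∀ j, IsProbabilityMeasure (νf j)]
    (k : Fin (m+1)) {U : Set (Fin (m+1) → ℝ)} (hU : MeasurableSet U) :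
    Measure.pi νf U = ∫⁻ y, (νf k) {t : ℝ | k.insertNth t y ∈ U}
      ∂(Measure.pi fun j => νf (k.succAbove j)) := by
  set e := MeasurableEquiv.piFinSuccAbove (fun _ : Fin (m+1) => ℝ) k with he
  have hesymm : ∀ (t : ℝ) (y : Fin m → ℝ), e.symm (t, y) = k.insertNth t y := by
    intro t y
    simp only [he, MeasurableEquiv.piFinSuccAbove]
    rfl
  have hV : MeasurableSet (e.symm ⁻¹' U) := e.symm.measurable hU
  have hmp := measurePreserving_piFinSuccAbove νf k
  have h1 : Measure.pi νf U
      = ((νf k).prod (Measure.pi fun j => νf (k.succAbove j))) (e.symm ⁻¹' U) := by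
    rw [← hmp.map_eq, Measure.map_apply e.measurable hV]
    congr 1
    ext x
    simp
  rw [h1, Measure.prod_apply_symm hV]
  exact lintegral_congr fun y => rfl

lemma tie_null {m : ℕ} (νf : Fin (m+1) → Measure ℝ) [∀ j, IsProbabilityMeasure (νf j)]
    (hcont : ∀ j, Continuous (mcdf (νf j))) (lam : Fin (m+1) → ℝ) :
    Measure.pi νf (tieSet lam) = 0 := by
  refine measure_iUnion_null fun j => measure_iUnion_null fun k => measure_iUnion_null fun hjk => ?_
  have hS : MeasurableSet {x : Fin (m+1) → ℝ | x j + lam j = x k + lam k} :=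
    measurableSet_eq_fun ((measurable_pi_apply j).add_const _) ((measurable_pi_apply k).add_const _)
  rw [pi_fiber νf k hS]
  have hz : ∀ y : Fin m → ℝ,
      (νf k) {t : ℝ | (k.insertNth t y : Fin (m+1) → ℝ) j + lam j
        = (k.insertNth t y : Fin (m+1) → ℝ) k + lam k} = 0 := by
    intro y
    obtain ⟨j', hj'⟩ := Fin.exists_succAbove_eq hjk
    have hset : {t : ℝ | (k.insertNth t y : Fin (m+1) → ℝ) j + lam j
        = (k.insertNth t y : Fin (m+1) → ℝ) k + lam k} = {y j' + lam j - lam k} := by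
      ext t
      rw [← hj']
      simp only [Set.mem_setOf_eq, Fin.insertNth_apply_succAbove, Fin.insertNth_apply_same,
        Set.mem_singleton_iff]
      constructor <;> intro h <;> linarith
    rw [hset]
    exact mcdf_singleton (hcont k) _
  simp only [Set.mem_setOf_eq]
  rw [lintegral_congr hz]
  simp

lemma Ubig_measure {m : ℕ} {xbar : ℝ} (νf : Fin (m+1) → Measure ℝ)
    [∀ j, IsProbabilityMeasure (νf j)]
    (hcont : ∀ j, Continuous (mcdf (νf j))) (lam : Fin (m+1) → ℝ) (H : Finset (Fin (m+1))) :
    (Measure.pi νf (Ubig xbar lam H)).toReal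
      = ∑ j ∈ H, (Measure.pi νf (laguerre xbar lam j)).toReal := by
  have hdisj : ((H : Set (Fin (m+1)))).PairwiseDisjoint (fun j => laguerre xbar lam j) :=
    fun j _ j' _ h => laguerre_disjoint h
  have hmeas : ∀ j ∈ H, MeasurableSet (laguerre xbar lam j) :=
    fun j _ => measurableSet_laguerre xbar lam j
  have hsum : Measure.pi νf (⋃ j ∈ H, laguerre xbar lam j)
      = ∑ j ∈ H, Measure.pi νf (laguerre xbar lam j) :=
    measure_biUnion_finset hdisj hmeas
  have hEq : Measure.pi νf (Ubig xbar lam H) = Measure.pi νf (⋃ j ∈ H, laguerre xbar lam j) := by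
    refine le_antisymm ?_ (measure_mono (Set.iUnion₂_subset fun j hj => laguerre_subset_Ubig hj))
    calc Measure.pi νf (Ubig xbar lam H)
        ≤ Measure.pi νf ((⋃ j ∈ H, laguerre xbar lam j) ∪ tieSet lam) :=
          measure_mono Ubig_subset_cells
      _ ≤ Measure.pi νf (⋃ j ∈ H, laguerre xbar lam j) + Measure.pi νf (tieSet lam) :=
          measure_union_le _ _
      _ = Measure.pi νf (⋃ j ∈ H, laguerre xbar lam j) := by
          rw [tie_null νf hcont lam, add_zero]
  rw [hEq, hsum, ENNReal.toReal_sum (fun j _ => measure_ne_top _ _)]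

end Fiber

section Mono

lemma insertNth_mono {m : ℕ} (k : Fin (m+1)) {t t' : ℝ} (h : t ≤ t') (y : Fin m → ℝ)
    (j : Fin (m+1)) : (k.insertNth t y : Fin (m+1) → ℝ) j ≤ (k.insertNth t' y : Fin (m+1) → ℝ) j := by
  by_cases hj : j = k
  · subst hj
    simp only [Fin.insertNth_apply_same]
    exact h
  · obtain ⟨j', rfl⟩ := Fin.exists_succAbove_eq hj
    simp only [Fin.insertNth_apply_succAbove]
    exact le_rfl

lemma insertNth_ne {m : ℕ} (k : Fin (m+1)) (t t' : ℝ) (y : Fin m → ℝ)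
    {j : Fin (m+1)} (hj : j ≠ k) :
    (k.insertNth t y : Fin (m+1) → ℝ) j = (k.insertNth t' y : Fin (m+1) → ℝ) j := by
  obtain ⟨j', rfl⟩ := Fin.exists_succAbove_eq hj
  simp only [Fin.insertNth_apply_succAbove]

lemma Ubig_mono {m : ℕ} (xbar : ℝ) (lam : Fin (m+1) → ℝ) (H : Finset (Fin (m+1)))
    (k : Fin (m+1)) :
    (∀ (y : Fin m → ℝ) ⦃t t' : ℝ⦄, t ∈ Set.Icc 0 xbar → t' ∈ Set.Icc 0 xbar → t ≤ t' →
      k.insertNth t y ∈ Ubig xbar lam H → k.insertNth t' y ∈ Ubig xbar lam H) ∨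
    (∀ (y : Fin m → ℝ) ⦃t t' : ℝ⦄, t ∈ Set.Icc 0 xbar → t' ∈ Set.Icc 0 xbar → t ≤ t' →
      k.insertNth t' y ∈ Ubig xbar lam H → k.insertNth t y ∈ Ubig xbar lam H) := by
  by_cases hk : k ∈ H
  · left
    intro y t t' ht ht' htt' hmem
    have hbox : ∀ j, (k.insertNth t' y : Fin (m+1) → ℝ) j ∈ Set.Icc (0:ℝ) xbar := by
      intro j
      by_cases hj : j = k
      · subst hj; simpa only [Fin.insertNth_apply_same] using ht'
      · rw [← insertNth_ne k t t' y hj]; exact hmem.1 j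
    refine ⟨hbox, fun j hj => ?_⟩
    obtain ⟨j', hj'H, hlt⟩ := hmem.2 j hj
    refine ⟨j', hj'H, ?_⟩
    have hjk : j ≠ k := fun h => hj (h ▸ hk)
    rw [← insertNth_ne k t t' y hjk]
    calc (k.insertNth t y : Fin (m+1) → ℝ) j + lam j
        < (k.insertNth t y : Fin (m+1) → ℝ) j' + lam j' := hlt
      _ ≤ (k.insertNth t' y : Fin (m+1) → ℝ) j' + lam j' := by
          have := insertNth_mono k htt' y j'
          linarith
  · right
    intro y t t' ht ht' htt' hmem
    have hbox : ∀ j, (k.insertNth t y : Fin (m+1) → ℝ) j ∈ Set.Icc (0:ℝ) xbar := by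
      intro j
      by_cases hj : j = k
      · subst hj; simpa only [Fin.insertNth_apply_same] using ht
      · rw [insertNth_ne k t t' y hj]; exact hmem.1 j
    refine ⟨hbox, fun j hj => ?_⟩
    obtain ⟨j', hj'H, hlt⟩ := hmem.2 j hj
    refine ⟨j', hj'H, ?_⟩
    have hj'k : j' ≠ k := fun h => hk (h ▸ hj'H)
    rw [insertNth_ne k t t' y hj'k]
    calc (k.insertNth t y : Fin (m+1) → ℝ) j + lam j
        ≤ (k.insertNth t' y : Fin (m+1) → ℝ) j + lam j := by
          have := insertNth_mono k htt' y j
          linarith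
      _ < (k.insertNth t' y : Fin (m+1) → ℝ) j' + lam j' := hlt

/-- If `H` is up-closed for the differences `lam1 - lam2`, then `Ubig lam2 H ⊆ Ubig lam1 H`. -/
lemma Ubig_incl {n : ℕ} {xbar : ℝ} {lam1 lam2 : Fin n → ℝ} {H : Finset (Fin n)}
    (hH : ∀ j' ∈ H, ∀ j ∉ H, lam1 j - lam2 j < lam1 j' - lam2 j'
      ∨ lam1 j - lam2 j ≤ lam1 j' - lam2 j') :
    Ubig xbar lam2 H ⊆ Ubig xbar lam1 H := by
  intro x hx
  refine ⟨hx.1, fun j hj => ?_⟩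
  obtain ⟨j', hj'H, hlt⟩ := hx.2 j hj
  refine ⟨j', hj'H, ?_⟩
  rcases hH j' hj'H j hj with h | h <;> linarith

end Mono

section DiffBound

lemma exists_cell {n : ℕ} [Nonempty (Fin n)] {xbar : ℝ} {lam : Fin n → ℝ} {x : Fin n → ℝ}
    (hbox : ∀ j, x j ∈ Set.Icc (0:ℝ) xbar) (ht : x ∉ tieSet lam) :
    ∃ j, x ∈ laguerre xbar lam j := by
  obtain ⟨j, -, hjmax⟩ := Finset.exists_max_image Finset.univ (fun j => x j + lam j)
    Finset.univ_nonempty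
  refine ⟨j, hbox, fun j'' hj'' => ?_⟩
  rcases lt_or_eq_of_le (hjmax j'' (Finset.mem_univ j'')) with h | h
  · exact h
  · exact absurd (Set.mem_iUnion.mpr ⟨j'', Set.mem_iUnion.mpr ⟨j, Set.mem_iUnion.mpr ⟨hj'', h⟩⟩⟩) ht

lemma diff_bound {m : ℕ} {xbar Δ1 Δ2 : ℝ}
    (Fm M1 M2 : Fin (m+1) → Measure ℝ)
    [∀ j, IsProbabilityMeasure (Fm j)] [∀ j, IsProbabilityMeasure (M1 j)]
    [∀ j, IsProbabilityMeasure (M2 j)]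
    (hFsupp : ∀ j, Fm j (Set.Icc (0:ℝ) xbar) = 1)
    (hM1supp : ∀ j, M1 j (Set.Icc (0:ℝ) xbar) = 1)
    (hM2supp : ∀ j, M2 j (Set.Icc (0:ℝ) xbar) = 1)
    (hFcont : ∀ j, Continuous (mcdf (Fm j)))
    (hM1cont : ∀ j, Continuous (mcdf (M1 j)))
    (hM2cont : ∀ j, Continuous (mcdf (M2 j)))
    (hΔ1 : 0 ≤ Δ1) (hΔ2 : 0 ≤ Δ2)
    (hclose1 : ∀ j x, |mcdf (Fm j) x - mcdf (M1 j) x| ≤ Δ1)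
    (hclose2 : ∀ j x, |mcdf (Fm j) x - mcdf (M2 j) x| ≤ Δ2)
    (pstar : Fin (m+1) → ℝ) (lam1 lam2 : Fin (m+1) → ℝ)
    (h1 : ∀ j, (Measure.pi M1 (laguerre xbar lam1 j)).toReal = pstar j)
    (h2 : ∀ j, (Measure.pi M2 (laguerre xbar lam2 j)).toReal = pstar j)
    (i : Fin (m+1)) :
    (Measure.pi Fm (laguerre xbar lam1 i \ laguerre xbar lam2 i)).toReal
      ≤ (m+1 : ℕ) * (Δ1 + Δ2) := by
  classical
  set H : Finset (Fin (m+1)) := Finset.univ.filter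
    (fun j => lam1 i - lam2 i ≤ lam1 j - lam2 j) with hH
  have hiH : i ∈ H := by simp [hH]
  have hincl0 : Ubig xbar lam2 H ⊆ Ubig xbar lam1 H := by
    apply Ubig_incl
    intro j' hj' j hj
    right
    simp only [hH, Finset.mem_filter, Finset.mem_univ, true_and, not_le] at hj' hj
    linarith
  have hdiffsub : laguerre xbar lam1 i \ laguerre xbar lam2 i
      ⊆ (Ubig xbar lam1 H \ Ubig xbar lam2 H) ∪ tieSet lam2 := by
    rintro x ⟨hxA, hxB⟩
    by_cases htie : x ∈ tieSet lam2
    · exact Or.inr htie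
    left
    refine ⟨laguerre_subset_Ubig hiH hxA, ?_⟩
    obtain ⟨j, hxj⟩ := exists_cell hxA.1 htie
    have hji : j ≠ i := fun h => hxB (h ▸ hxj)
    have hjnH : j ∉ H := by
      have hA := hxA.2 j hji
      have hB := hxj.2 i hji.symm
      simp only [hH, Finset.mem_filter, Finset.mem_univ, true_and, not_le]
      linarith
    intro hxU2
    obtain ⟨j', hj'H, hlt⟩ := hxU2.2 j hjnH
    have hne : j' ≠ j := fun h => hjnH (h ▸ hj'H)
    have := hxj.2 j' hne
    linarith
  set μF := Measure.pi Fm with hμF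
  have hU1m : MeasurableSet (Ubig xbar lam1 H) := measurableSet_Ubig _ _ _
  have hU2m : MeasurableSet (Ubig xbar lam2 H) := measurableSet_Ubig _ _ _
  have key1 : (μF (laguerre xbar lam1 i \ laguerre xbar lam2 i)).toReal
      ≤ (μF (Ubig xbar lam1 H)).toReal - (μF (Ubig xbar lam2 H)).toReal := by
    have step1 : μF (laguerre xbar lam1 i \ laguerre xbar lam2 i)
        ≤ μF (Ubig xbar lam1 H \ Ubig xbar lam2 H) := by
      calc μF (laguerre xbar lam1 i \ laguerre xbar lam2 i)
          ≤ μF ((Ubig xbar lam1 H \ Ubig xbar lam2 H) ∪ tieSet lam2) :=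
            measure_mono hdiffsub
        _ ≤ μF (Ubig xbar lam1 H \ Ubig xbar lam2 H) + μF (tieSet lam2) :=
            measure_union_le _ _
        _ = μF (Ubig xbar lam1 H \ Ubig xbar lam2 H) := by
            rw [tie_null Fm hFcont lam2, add_zero]
    have step2 : μF (Ubig xbar lam1 H \ Ubig xbar lam2 H)
        = μF (Ubig xbar lam1 H) - μF (Ubig xbar lam2 H) :=
      measure_diff hincl0 hU2m.nullMeasurableSet (measure_ne_top _ _)
    calc (μF (laguerre xbar lam1 i \ laguerre xbar lam2 i)).toReal
        ≤ (μF (Ubig xbar lam1 H \ Ubig xbar lam2 H)).toReal :=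
          ENNReal.toReal_mono (measure_ne_top _ _) step1
      _ = (μF (Ubig xbar lam1 H)).toReal - (μF (Ubig xbar lam2 H)).toReal := by
          rw [step2, ENNReal.toReal_sub_of_le (measure_mono hincl0) (measure_ne_top _ _)]
  have hyb1 : |(μF (Ubig xbar lam1 H)).toReal - (Measure.pi M1 (Ubig xbar lam1 H)).toReal|
      ≤ (m+1 : ℕ) * Δ1 :=
    pi_hybrid_real Fm M1 hFsupp hM1supp hFcont hM1cont hΔ1 hclose1 hU1m
      (fun x hx k => hx.1 k) (Ubig_mono xbar lam1 H)
  have hyb2 : |(μF (Ubig xbar lam2 H)).toReal - (Measure.pi M2 (Ubig xbar lam2 H)).toReal|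
      ≤ (m+1 : ℕ) * Δ2 :=
    pi_hybrid_real Fm M2 hFsupp hM2supp hFcont hM2cont hΔ2 hclose2 hU2m
      (fun x hx k => hx.1 k) (Ubig_mono xbar lam2 H)
  have e1 : (Measure.pi M1 (Ubig xbar lam1 H)).toReal = ∑ j ∈ H, pstar j := by
    rw [Ubig_measure M1 hM1cont lam1 H]
    exact Finset.sum_congr rfl fun j _ => h1 j
  have e2 : (Measure.pi M2 (Ubig xbar lam2 H)).toReal = ∑ j ∈ H, pstar j := by
    rw [Ubig_measure M2 hM2cont lam2 H]
    exact Finset.sum_congr rfl fun j _ => h2 j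
  rw [e1] at hyb1
  rw [e2] at hyb2
  rw [abs_le] at hyb1 hyb2
  have := hyb1.2
  have := hyb2.1
  push_cast at *
  linarith

end DiffBound

/-- If `G = G¹ ⊗ … ⊗ Gⁿ` and `F = F¹ ⊗ … ⊗ Fⁿ` are product distributions on `[0,x̄]^n` with
continuous marginal CDFs that are uniformly within `Δ` of each other coordinatewise, and
`λ` (resp. `λ*`) is a greedy policy achieving the target fractions `p*` under `G` (resp. `F`),
then agent `i`'s expected utilities under the two policies (with values drawn from `F`)
differ by at most `n Δ x̄`. -/
theorem utility_bound_from_learning_error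
    {n : ℕ} (xbar Δ : ℝ) (hxbar : 0 < xbar)
    (Fm Gm : Fin n → Measure ℝ)
    [∀ j, IsProbabilityMeasure (Fm j)] [∀ j, IsProbabilityMeasure (Gm j)]
    (hFsupp : ∀ j, Fm j (Set.Icc (0 : ℝ) xbar) = 1)
    (hGsupp : ∀ j, Gm j (Set.Icc (0 : ℝ) xbar) = 1)
    (hFcont : ∀ j, Continuous (mcdf (Fm j)))
    (hGcont : ∀ j, Continuous (mcdf (Gm j)))
    (hclose : ∀ j x, |mcdf (Fm j) x - mcdf (Gm j) x| ≤ Δ)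
    (pstar : Fin n → ℝ) (hpos : ∀ j, 0 < pstar j) (hsum : ∑ j, pstar j = 1)
    (lam lamstar : Fin n → ℝ)
    (hlam : ∀ j, pAlloc xbar (Measure.pi Gm) lam j = pstar j)
    (hlamstar : ∀ j, pAlloc xbar (Measure.pi Fm) lamstar j = pstar j)
    (i : Fin n) :
    |(∫ x in laguerre xbar lam i, x i ∂Measure.pi Fm) -
      (∫ x in laguerre xbar lamstar i, x i ∂Measure.pi Fm)| ≤ n * Δ * xbar := by
  obtain ⟨m, rfl⟩ := Nat.exists_eq_succ_of_ne_zero (Fin.pos i).ne'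
  have hΔ : 0 ≤ Δ := le_trans (abs_nonneg _) (hclose i 0)
  have hcloseFF : ∀ (j : Fin (m+1)) x, |mcdf (Fm j) x - mcdf (Fm j) x| ≤ (0:ℝ) := by
    intro j x
    simp
  have hlam' : ∀ j, (Measure.pi Gm (laguerre xbar lam j)).toReal = pstar j := hlam
  have hlamstar' : ∀ j, (Measure.pi Fm (laguerre xbar lamstar j)).toReal = pstar j := hlamstar
  have d1 : (Measure.pi Fm (laguerre xbar lam i \ laguerre xbar lamstar i)).toReal
      ≤ (m+1 : ℕ) * (Δ + 0) :=
    diff_bound Fm Gm Fm hFsupp hGsupp hFsupp hFcont hGcont hFcont hΔ le_rfl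
      hclose hcloseFF pstar lam lamstar hlam' hlamstar' i
  have d2 : (Measure.pi Fm (laguerre xbar lamstar i \ laguerre xbar lam i)).toReal
      ≤ (m+1 : ℕ) * (0 + Δ) :=
    diff_bound Fm Fm Gm hFsupp hFsupp hGsupp hFcont hFcont hGcont le_rfl hΔ
      hcloseFF hclose pstar lamstar lam hlamstar' hlam' i
  set μF := Measure.pi Fm with hμF
  set A := laguerre xbar lam i with hA
  set B := laguerre xbar lamstar i with hB
  have hAm : MeasurableSet A := measurableSet_laguerre _ _ _
  have hBm : MeasurableSet B := measurableSet_laguerre _ _ _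
  have hAbox : ∀ x ∈ A, ∀ j, x j ∈ Set.Icc (0:ℝ) xbar := fun x hx => hx.1
  have hBbox : ∀ x ∈ B, ∀ j, x j ∈ Set.Icc (0:ℝ) xbar := fun x hx => hx.1
  have hint : ∀ (S : Set (Fin (m+1) → ℝ)), MeasurableSet S →
      (∀ x ∈ S, ∀ j, x j ∈ Set.Icc (0:ℝ) xbar) →
      IntegrableOn (fun x => x i) S μF := by
    intro S hSm hSb
    have hbd : ∀ᵐ x ∂(μF.restrict S), ‖x i‖ ≤ xbar := by
      rw [ae_restrict_iff' hSm]
      refine ae_of_all _ fun x hx => ?_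
      have := hSb x hx i
      rw [Real.norm_eq_abs, abs_le]
      exact ⟨by linarith [this.1], this.2⟩
    exact Integrable.mono' (integrable_const xbar)
      ((measurable_pi_apply i).aestronglyMeasurable) hbd
  have hsplit : ∀ (S T : Set (Fin (m+1) → ℝ)), MeasurableSet S → MeasurableSet T →
      (∀ x ∈ S, ∀ j, x j ∈ Set.Icc (0:ℝ) xbar) →
      (∫ x in S, x i ∂μF) = (∫ x in S \ T, x i ∂μF) + ∫ x in S ∩ T, x i ∂μF := by
    intro S T hSm hTm hSb
    have hd : Disjoint (S \ T) (S ∩ T) := by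
      rw [Set.disjoint_left]
      rintro x ⟨-, hxT⟩ ⟨-, hxT'⟩
      exact hxT hxT'
    have hu : (S \ T) ∪ (S ∩ T) = S := Set.diff_union_inter S T
    conv_lhs => rw [← hu]
    exact setIntegral_union hd (hSm.inter hTm)
      ((hint S hSm hSb).mono_set Set.diff_subset)
      ((hint S hSm hSb).mono_set Set.inter_subset_left)
  have hsA := hsplit A B hAm hBm hAbox
  have hsB := hsplit B A hBm hAm hBbox
  have hinterc : (∫ x in B ∩ A, x i ∂μF) = ∫ x in A ∩ B, x i ∂μF := by
    rw [Set.inter_comm]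
  have hbound : ∀ (S T : Set (Fin (m+1) → ℝ)), MeasurableSet S → MeasurableSet T →
      (∀ x ∈ S, ∀ j, x j ∈ Set.Icc (0:ℝ) xbar) →
      0 ≤ (∫ x in S \ T, x i ∂μF) ∧
        (∫ x in S \ T, x i ∂μF) ≤ (μF (S \ T)).toReal * xbar := by
    intro S T hSm hTm hSb
    have hm : MeasurableSet (S \ T) := hSm.diff hTm
    have hIntD : IntegrableOn (fun x => x i) (S \ T) μF :=
      (hint S hSm hSb).mono_set Set.diff_subset
    refine ⟨setIntegral_nonneg hm fun x hx => (hSb x hx.1 i).1, ?_⟩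
    have hstep : (∫ x in S \ T, x i ∂μF) ≤ ∫ x in S \ T, (fun _ => xbar) x ∂μF := by
      apply setIntegral_mono_on hIntD (integrableOn_const (measure_ne_top _ _)) hm
      intro x hx
      exact (hSb x hx.1 i).2
    have hconst : (∫ x in S \ T, (fun _ => xbar) x ∂μF) = (μF (S \ T)).toReal * xbar := by
      rw [setIntegral_const, smul_eq_mul, measureReal_def]
    linarith
  obtain ⟨hP0, hP1⟩ := hbound A B hAm hBm hAbox
  obtain ⟨hQ0, hQ1⟩ := hbound B A hBm hAm hBbox
  have hPd : (μF (A \ B)).toReal * xbar ≤ ((m+1 : ℕ) * (Δ + 0)) * xbar :=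
    mul_le_mul_of_nonneg_right d1 (le_of_lt hxbar)
  have hQd : (μF (B \ A)).toReal * xbar ≤ ((m+1 : ℕ) * (0 + Δ)) * xbar :=
    mul_le_mul_of_nonneg_right d2 (le_of_lt hxbar)
  have hsimp : (∫ x in A, x i ∂μF) - (∫ x in B, x i ∂μF)
      = (∫ x in A \ B, x i ∂μF) - (∫ x in B \ A, x i ∂μF) := by
    rw [hsA, hsB, hinterc]
    ring
  rw [hsimp]
  have hgoal : |(∫ x in A \ B, x i ∂μF) - (∫ x in B \ A, x i ∂μF)|
      ≤ ((m+1 : ℕ) : ℝ) * Δ * xbar := by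
    rw [abs_le]
    constructor
    · push_cast at hQd ⊢
      linarith
    · push_cast at hPd ⊢
      linarith
  have hcast : ((m+1 : ℕ) : ℝ) * Δ * xbar = ((m.succ : ℕ) : ℝ) * Δ * xbar := rfl
  calc |(∫ x in A \ B, x i ∂μF) - (∫ x in B \ A, x i ∂μF)|
      ≤ ((m+1 : ℕ) : ℝ) * Δ * xbar := hgoal
    _ = ((m.succ : ℕ) : ℝ) * Δ * xbar := rfl
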